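/- arXiv:2502.15687 — 3 statements merged into one kernel-verified Lean document; each statement's English description precedes it below -/
import Mathlib

section
/- Let D be a nonempty finite set, and let (Ω, ℱ, P) be a probability space. For each d ∈ D let O_d : Ω → {0,1} be an integrable random click indicator with E[O_d] = ô_d where ô_d ∈ (0,1], let e_d ∈ ℝ be the true per-sample loss, and let ê_d ∈ ℝ be an arbitrary imputed loss. Define the doubly robust loss L_DR(ω) = (1/|D|) Σ_{d ∈ D} [ ê_d + O_d(ω)·(e_d − ê_d)/ô_d ] and the ideal loss L_ideal = (1/|D|) Σ_{d ∈ D} e_d. Then E[L_DR] = L_ideal, regardless of the values of the imputed losses ê_d. -/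
open MeasureTheory

/-- With accurate click propensities `ô_d = E[O_d] ∈ (0,1]`, the
doubly robust CVR loss is unbiased, `E[L_DR] = L_ideal`, regardless of the values of
the imputed losses `ê_d`. -/
theorem dr_estimator_unbiased {α : Type*} (D : Finset α) (hD : D.Nonempty)
    {Ω : Type*} [MeasurableSpace Ω] (P : Measure Ω) [IsProbabilityMeasure P]
    (O : α → Ω → ℝ) (hO01 : ∀ d ∈ D, ∀ ω, O d ω = 0 ∨ O d ω = 1)
    (hOint : ∀ d ∈ D, Integrable (O d) P)
    (oh : α → ℝ) (hoh : ∀ d ∈ D, oh d ∈ Set.Ioc (0 : ℝ) 1)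
    (hOmean : ∀ d ∈ D, ∫ ω, O d ω ∂P = oh d)
    (e ehat : α → ℝ) :
    ∫ ω, (1 / (D.card : ℝ)) * ∑ d ∈ D, (ehat d + O d ω * (e d - ehat d) / oh d) ∂P
      = (1 / (D.card : ℝ)) * ∑ d ∈ D, e d := by
  have hterm : ∀ d ∈ D, Integrable (fun ω => ehat d + O d ω * (e d - ehat d) / oh d) P := by
    intro d hd
    have : Integrable (fun ω => O d ω * ((e d - ehat d) / oh d)) P :=
      (hOint d hd).mul_const _
    simpa [mul_div_assoc] using (integrable_const (ehat d)).add this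
  rw [integral_const_mul, integral_finset_sum D hterm]
  congr 1
  refine Finset.sum_congr rfl fun d hd => ?_
  have h1 : ∫ ω, (ehat d + O d ω * (e d - ehat d) / oh d) ∂P
      = ehat d + (∫ ω, O d ω ∂P) * ((e d - ehat d) / oh d) := by
    rw [integral_add (integrable_const _) (by simpa [mul_div_assoc] using (hOint d hd).mul_const ((e d - ehat d) / oh d))]
    simp [mul_div_assoc, integral_mul_const]
  rw [h1, hOmean d hd]
  have hne : oh d ≠ 0 := ne_of_gt (hoh d hd).1
  field_simp
  ring
end

section
/- Let (Ω, ℱ, P) be a probability space, let X : Ω → 𝒳 be a random variable taking values in a nonempty finite type 𝒳 and let O : Ω → {0,1} be a random variable. Define the propensity score e : 𝒳 → ℝ by e(x) = P(O = 1 | X = x) for x with P(X = x) > 0 (and arbitrarily otherwise). Then for every v ∈ ℝ with P(e(X) = v) > 0, one has P(O = 1 | e(X) = v) = v. -/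
open MeasureTheory ProbabilityTheory

/-- **balancing property of the propensity score.** Let `X` be a random
variable with values in a nonempty finite type and `O` a click indicator. If
`e x = P(O = 1 | X = x)` for every `x` with `P(X = x) > 0`, then for every real `v`
with `P(e(X) = v) > 0` one has `P(O = 1 | e(X) = v) = v`. -/
theorem propensity_balancing
    {Ω : Type*} [MeasurableSpace Ω] (P : Measure Ω) [IsProbabilityMeasure P]
    {𝒳 : Type*} [Fintype 𝒳] [Nonempty 𝒳] [MeasurableSpace 𝒳] [MeasurableSingletonClass 𝒳]
    (X : Ω → 𝒳) (hX : Measurable X)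
    (O : Ω → ℝ) (hO01 : ∀ ω, O ω = 0 ∨ O ω = 1) (hmO : MeasurableSet {ω | O ω = 1})
    (e : 𝒳 → ℝ)
    (he : ∀ x : 𝒳, 0 < P {ω | X ω = x} →
      e x = (P[{ω | O ω = 1} | {ω | X ω = x}]).toReal) :
    ∀ v : ℝ, 0 < P {ω | e (X ω) = v} →
      (P[{ω | O ω = 1} | {ω | e (X ω) = v}]).toReal = v := by
  classical
  intro v hv
  set A : Set Ω := {ω | O ω = 1} with hA
  set B : Set Ω := {ω | e (X ω) = v} with hBdef
  have hSmeas : ∀ x : 𝒳, MeasurableSet {ω | X ω = x} := fun x =>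
    hX (measurableSet_singleton x)
  have hBmeas : MeasurableSet B := hX ((Set.toFinite (e ⁻¹' {v})).measurableSet)
  set s : Finset 𝒳 := Finset.univ.filter (fun x => e x = v) with hs
  -- decomposition of B ∩ C as a disjoint union
  have key : ∀ (C : Set Ω), MeasurableSet C →
      P (B ∩ C) = ∑ x ∈ s, P ({ω | X ω = x} ∩ C) := by
    intro C hC
    have hU : B ∩ C = ⋃ x ∈ s, ({ω | X ω = x} ∩ C) := by
      ext ω
      simp only [Set.mem_inter_iff, Set.mem_iUnion, hBdef, Set.mem_setOf_eq, hs,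
        Finset.mem_filter, Finset.mem_univ, true_and]
      constructor
      · rintro ⟨h1, h2⟩; exact ⟨X ω, h1, rfl, h2⟩
      · rintro ⟨x, hx, rfl, h2⟩; exact ⟨hx, h2⟩
    rw [hU, measure_biUnion_finset]
    · intro x _ y _ hxy
      refine Set.disjoint_left.2 ?_
      rintro ω ⟨(hx : X ω = x), _⟩ ⟨(hy : X ω = y), _⟩
      exact hxy (hx ▸ hy ▸ rfl)
    · intro x _
      exact (hSmeas x).inter hC
  -- per-element: P({X=x} ∩ A).toReal = v * P({X=x}).toReal for x ∈ s
  have hper : ∀ x ∈ s, (P ({ω | X ω = x} ∩ A)).toReal = v * (P {ω | X ω = x}).toReal := by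
    intro x hx
    have hev : e x = v := (Finset.mem_filter.1 hx).2
    rcases eq_or_lt_of_le (zero_le : (0 : ENNReal) ≤ P {ω | X ω = x}) with h0 | h0
    · have h1 : P ({ω | X ω = x} ∩ A) = 0 :=
        le_antisymm (le_trans (measure_mono Set.inter_subset_left) h0.ge) zero_le
      simp [h1, ← h0]
    · have := he x h0
      rw [cond_apply (hSmeas x) P A] at this
      have hne : P {ω | X ω = x} ≠ 0 := h0.ne'
      have hnt : P {ω | X ω = x} ≠ ⊤ := measure_ne_top P _
      rw [ENNReal.toReal_mul, ENNReal.toReal_inv] at this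
      have hPpos : 0 < (P {ω | X ω = x}).toReal := ENNReal.toReal_pos hne hnt
      rw [hev] at this
      field_simp at this ⊢
      linarith [this]
  -- sum up
  have hBA : (P (B ∩ A)).toReal = v * (P B).toReal := by
    have h1 : P (B ∩ A) = ∑ x ∈ s, P ({ω | X ω = x} ∩ A) := key A hmO
    have h2 : P B = ∑ x ∈ s, P {ω | X ω = x} := by
      have := key Set.univ MeasurableSet.univ
      simpa using this
    rw [h1, h2, ENNReal.toReal_sum (fun x _ => measure_ne_top P _),
      ENNReal.toReal_sum (fun x _ => measure_ne_top P _), Finset.mul_sum]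
    exact Finset.sum_congr rfl hper
  rw [cond_apply hBmeas P A, ENNReal.toReal_mul, ENNReal.toReal_inv, hBA]
  have hPpos : 0 < (P B).toReal := ENNReal.toReal_pos hv.ne' (measure_ne_top P _)
  field_simp
end

section
/- Let (Ω, ℱ, P) be a probability space, let X : Ω → 𝒳 be a random variable taking values in a nonempty finite type 𝒳, let O : Ω → {0,1} be the treatment (click) indicator, and let Y : Ω → 𝒴 be a random variable taking values in a finite type 𝒴 (the pair of potential conversion outcomes). Assume unconfoundedness given X: for every x with P(X = x) > 0 and every y ∈ 𝒴, P(O = 1, Y = y | X = x) = P(O = 1 | X = x)·P(Y = y | X = x). Define the propensity score e(x) = P(O = 1 | X = x). Then Y and O are conditionally independent given e(X): for every v with P(e(X) = v) > 0 and every y ∈ 𝒴, P(O = 1, Y = y | e(X) = v) = P(O = 1 | e(X) = v)·P(Y = y | e(X) = v). -/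
open MeasureTheory ProbabilityTheory

/-- **Rosenbaum–Rubin, Theorem 3.** If the outcome `Y` and the click
indicator `O` are conditionally independent given the covariates `X` (unconfoundedness),
then they are conditionally independent given the propensity score
`e(X) = P(O = 1 | X)`. -/
theorem rosenbaum_rubin_propensity
    {Ω : Type*} [MeasurableSpace Ω] (P : Measure Ω) [IsProbabilityMeasure P]
    {𝒳 : Type*} [Fintype 𝒳] [Nonempty 𝒳] [MeasurableSpace 𝒳] [MeasurableSingletonClass 𝒳]
    {𝒴 : Type*} [Fintype 𝒴] [MeasurableSpace 𝒴] [MeasurableSingletonClass 𝒴]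
    (X : Ω → 𝒳) (hX : Measurable X)
    (O : Ω → ℝ) (hO01 : ∀ ω, O ω = 0 ∨ O ω = 1) (hmO : MeasurableSet {ω | O ω = 1})
    (Y : Ω → 𝒴) (hY : Measurable Y)
    (hunconf : ∀ x : 𝒳, 0 < P {ω | X ω = x} → ∀ y : 𝒴,
      P[{ω | O ω = 1} ∩ {ω | Y ω = y} | {ω | X ω = x}]
        = P[{ω | O ω = 1} | {ω | X ω = x}] * P[{ω | Y ω = y} | {ω | X ω = x}])
    (e : 𝒳 → ℝ)
    (he : ∀ x : 𝒳, 0 < P {ω | X ω = x} →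
      e x = (P[{ω | O ω = 1} | {ω | X ω = x}]).toReal) :
    ∀ v : ℝ, 0 < P {ω | e (X ω) = v} → ∀ y : 𝒴,
      P[{ω | O ω = 1} ∩ {ω | Y ω = y} | {ω | e (X ω) = v}]
        = P[{ω | O ω = 1} | {ω | e (X ω) = v}]
          * P[{ω | Y ω = y} | {ω | e (X ω) = v}] := by
  classical
  intro v hv y
  set c : ENNReal := ENNReal.ofReal v with hc
  set A : Set Ω := {ω | O ω = 1} with hA
  set B : Set Ω := {ω | Y ω = y} with hB
  have hmB : MeasurableSet B := hY (measurableSet_singleton y)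
  set E : Set Ω := {ω | e (X ω) = v} with hEdef
  have hmx : ∀ x : 𝒳, MeasurableSet {ω | X ω = x} :=
    fun x => hX (measurableSet_singleton x)
  set S : Finset 𝒳 := Finset.univ.filter (fun x => e x = v) with hS
  have hEeq : E = ⋃ x ∈ S, {ω | X ω = x} := by
    ext ω
    simp only [hEdef, hS, Set.mem_setOf_eq, Set.mem_iUnion, Finset.mem_filter,
      Finset.mem_univ, true_and]
    constructor
    · intro h; exact ⟨X ω, h, rfl⟩
    · rintro ⟨x, hx, rfl⟩; exact hx
  have hmE : MeasurableSet E := by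
    rw [hEeq]; exact S.measurableSet_biUnion (fun x _ => hmx x)
  -- splitting lemma
  have hsplit : ∀ T : Set Ω, MeasurableSet T →
      P (E ∩ T) = ∑ x ∈ S, P ({ω | X ω = x} ∩ T) := by
    intro T hT
    have : E ∩ T = ⋃ x ∈ S, ({ω | X ω = x} ∩ T) := by
      rw [hEeq, Set.iUnion₂_inter]
    rw [this]
    refine measure_biUnion_finset ?_ (fun x _ => (hmx x).inter hT)
    intro x hx x' hx' hxx'
    refine Set.disjoint_left.2 ?_
    rintro ω ⟨h1, -⟩ ⟨h2, -⟩
    exact hxx' (h1.symm.trans h2)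
  -- per-x facts
  have hkeyO : ∀ x ∈ S, P ({ω | X ω = x} ∩ A) = c * P {ω | X ω = x} := by
    intro x hx
    rcases eq_or_lt_of_le (zero_le : 0 ≤ P {ω | X ω = x}) with h0 | hpos
    · have h1 : P ({ω | X ω = x} ∩ A) = 0 :=
        le_antisymm (le_trans (measure_mono Set.inter_subset_left) h0.symm.le) zero_le
      rw [h1, ← h0, mul_zero]
    · have hxne : P {ω | X ω = x} ≠ 0 := hpos.ne'
      have hxfin : P {ω | X ω = x} ≠ ⊤ := measure_ne_top P _
      have hcondA : P[A | {ω | X ω = x}] = (P {ω | X ω = x})⁻¹ * P ({ω | X ω = x} ∩ A) :=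
        cond_apply (hmx x) P A
      have hfinA : P[A | {ω | X ω = x}] ≠ ⊤ := by
        rw [hcondA]
        exact ENNReal.mul_ne_top (ENNReal.inv_ne_top.2 hxne) (measure_ne_top P _)
      have hex : e x = v := by
        simpa [hS] using hx
      have hce : P[A | {ω | X ω = x}] = c := by
        rw [hc, ← hex, he x hpos, ENNReal.ofReal_toReal hfinA]
      calc P ({ω | X ω = x} ∩ A)
          = P {ω | X ω = x} * ((P {ω | X ω = x})⁻¹ * P ({ω | X ω = x} ∩ A)) := by
            rw [← mul_assoc, ENNReal.mul_inv_cancel hxne hxfin, one_mul]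
        _ = P {ω | X ω = x} * c := by rw [← hcondA, hce]
        _ = c * P {ω | X ω = x} := mul_comm _ _
  have hkeyAB : ∀ x ∈ S, P ({ω | X ω = x} ∩ (A ∩ B)) = c * P ({ω | X ω = x} ∩ B) := by
    intro x hx
    rcases eq_or_lt_of_le (zero_le : 0 ≤ P {ω | X ω = x}) with h0 | hpos
    · have h1 : P ({ω | X ω = x} ∩ (A ∩ B)) = 0 :=
        le_antisymm (le_trans (measure_mono Set.inter_subset_left) h0.symm.le) zero_le
      have h2 : P ({ω | X ω = x} ∩ B) = 0 :=
        le_antisymm (le_trans (measure_mono Set.inter_subset_left) h0.symm.le) zero_le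
      rw [h1, h2, mul_zero]
    · have hxne : P {ω | X ω = x} ≠ 0 := hpos.ne'
      have hxfin : P {ω | X ω = x} ≠ ⊤ := measure_ne_top P _
      have hcondA : P[A | {ω | X ω = x}] = (P {ω | X ω = x})⁻¹ * P ({ω | X ω = x} ∩ A) :=
        cond_apply (hmx x) P A
      have hfinA : P[A | {ω | X ω = x}] ≠ ⊤ := by
        rw [hcondA]
        exact ENNReal.mul_ne_top (ENNReal.inv_ne_top.2 hxne) (measure_ne_top P _)
      have hex : e x = v := by simpa [hS] using hx
      have hce : P[A | {ω | X ω = x}] = c := by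
        rw [hc, ← hex, he x hpos, ENNReal.ofReal_toReal hfinA]
      have hu := hunconf x hpos y
      have hcondAB : P[A ∩ B | {ω | X ω = x}]
          = (P {ω | X ω = x})⁻¹ * P ({ω | X ω = x} ∩ (A ∩ B)) :=
        cond_apply (hmx x) P (A ∩ B)
      have hcondB : P[B | {ω | X ω = x}] = (P {ω | X ω = x})⁻¹ * P ({ω | X ω = x} ∩ B) :=
        cond_apply (hmx x) P B
      calc P ({ω | X ω = x} ∩ (A ∩ B))
          = P {ω | X ω = x} * ((P {ω | X ω = x})⁻¹ * P ({ω | X ω = x} ∩ (A ∩ B))) := by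
            rw [← mul_assoc, ENNReal.mul_inv_cancel hxne hxfin, one_mul]
        _ = P {ω | X ω = x} * (P[A ∩ B | {ω | X ω = x}]) := by rw [← hcondAB]
        _ = P {ω | X ω = x} * (c * P[B | {ω | X ω = x}]) := by rw [hu, hce]
        _ = c * (P {ω | X ω = x} * ((P {ω | X ω = x})⁻¹ * P ({ω | X ω = x} ∩ B))) := by
            rw [← hcondB]; ring
        _ = c * P ({ω | X ω = x} ∩ B) := by
            rw [← mul_assoc (P {ω | X ω = x}), ENNReal.mul_inv_cancel hxne hxfin, one_mul]
  -- totals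
  have hEA : P (E ∩ A) = c * P E := by
    rw [hsplit A hmO]
    have hE2 : P E = ∑ x ∈ S, P {ω | X ω = x} := by
      have := hsplit Set.univ MeasurableSet.univ
      simpa using this
    rw [hE2, Finset.mul_sum]
    exact Finset.sum_congr rfl hkeyO
  have hEAB : P (E ∩ (A ∩ B)) = c * P (E ∩ B) := by
    rw [hsplit (A ∩ B) (hmO.inter hmB), hsplit B hmB, Finset.mul_sum]
    exact Finset.sum_congr rfl hkeyAB
  have hEne : P E ≠ 0 := hv.ne'
  have hEfin : P E ≠ ⊤ := measure_ne_top P _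
  rw [cond_apply hmE P (A ∩ B), cond_apply hmE P A, cond_apply hmE P B, hEAB, hEA]
  calc (P E)⁻¹ * (c * P (E ∩ B))
      = c * ((P E)⁻¹ * P (E ∩ B)) := by ring
    _ = ((P E)⁻¹ * (c * P E)) * ((P E)⁻¹ * P (E ∩ B)) := by
        have h : (P E)⁻¹ * (c * P E) = c := by
          rw [mul_comm c (P E), ← mul_assoc, ENNReal.inv_mul_cancel hEne hEfin, one_mul]
        rw [h]
end
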